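/- In any perfect Polish space $X$ there is a sequence $(S_n)_{n<\omega}$ of open subsets with the property that for every nonempty open $U \subseteq X$ there is $N < \omega$ such that for all $n \geq N$, both $S_n \cap U \neq \emptyset$ and $\mathrm{Int}(X \setminus S_n) \cap U \neq \emptyset$. -/

import Mathlib

open Set Metric Topology Filter

/-- In a perfect T1 space, a nonempty open set minus a finite set is nonempty. -/
lemma aux_avoid {X : Type} [TopologicalSpace X] [T1Space X]
    (hperf : Perfect (Set.univ : Set X)) {V : Set X} (hV : IsOpen V) (hne : V.Nonempty)
    {P : Set X} (hP : P.Finite) : (V \ P).Nonempty := by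
  obtain ⟨x, hx⟩ := hne
  have hacc : AccPt x (𝓟 (Set.univ : Set X)) := hperf.acc _ (mem_univ x)
  rw [AccPt, principal_univ, inf_top_eq] at hacc
  have hmem : V \ (P \ {x}) ∈ 𝓝 x := by
    refine (hV.sdiff ((hP.subset (diff_subset)).isClosed)).mem_nhds ⟨hx, fun h => h.2 rfl⟩
  have hmem' : V \ (P \ {x}) ∈ 𝓝[≠] x := mem_nhdsWithin_of_mem_nhds hmem
  obtain ⟨y, ⟨hyV, hyP⟩, hyx⟩ :=
    hacc.nonempty_of_mem (inter_mem hmem' self_mem_nhdsWithin)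
  exact ⟨y, hyV, fun h => hyP ⟨h, hyx⟩⟩

lemma aux_main {X : Type} [MetricSpace X] (hperf : Perfect (Set.univ : Set X))
    (B : ℕ → Set X) (hBo : ∀ k, IsOpen (B k)) (hBne : ∀ k, (B k).Nonempty) (n : ℕ) :
    ∃ S : Set X, IsOpen S ∧ ∀ k ≤ n, (S ∩ B k).Nonempty ∧ ((closure S)ᶜ ∩ B k).Nonempty := by
  suffices h : ∀ j, j ≤ n + 1 → ∃ S : Set X, IsOpen S ∧ (∀ k < j, (S ∩ B k).Nonempty) ∧
      ∃ C : ℕ → Set X, ∀ m ≤ n, IsOpen (C m) ∧ (C m).Nonempty ∧ C m ⊆ B m ∧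
        Disjoint (C m) (closure S) by
    obtain ⟨S, hSo, h1, C, hC⟩ := h (n+1) le_rfl
    refine ⟨S, hSo, fun k hk => ⟨h1 k (by omega), ?_⟩⟩
    obtain ⟨y, hy⟩ := (hC k hk).2.1
    exact ⟨y, Set.disjoint_left.1 (hC k hk).2.2.2 hy, (hC k hk).2.2.1 hy⟩
  intro j
  induction j with
  | zero =>
    intro _
    exact ⟨∅, isOpen_empty, by simp, B, fun m hm => ⟨hBo m, hBne m, subset_rfl, by simp⟩⟩
  | succ j ih =>
    intro hj1
    have hj : j ≤ n := by omega
    obtain ⟨S, hSo, h1, C, hC⟩ := ih (by omega)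
    -- pick witness points p m ∈ C m for m ≤ n
    have hpex : ∀ m, ∃ x : X, m ≤ n → x ∈ C m := by
      intro m
      by_cases hm : m ≤ n
      · exact ((hC m hm).2.1).imp fun x hx _ => hx
      · exact ⟨(hBne 0).choose, fun h => absurd h hm⟩
    choose p hp using hpex
    set P : Set X := p '' {m | m ≤ n} with hP
    have hPfin : P.Finite := (Set.finite_Iic n).image p
    -- pick x ∈ C j \ P
    obtain ⟨x, hxC, hxP⟩ := aux_avoid hperf (hC j hj).1 (hC j hj).2.1 hPfin
    have hVopen : IsOpen (C j \ P) := (hC j hj).1.sdiff hPfin.isClosed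
    obtain ⟨r, hr, hball⟩ := Metric.isOpen_iff.1 hVopen x ⟨hxC, hxP⟩
    set U : Set X := ball x (r/2) with hU
    have hclU : closure U ⊆ C j \ P :=
      (closure_ball_subset_closedBall).trans
        ((closedBall_subset_ball (by linarith)).trans hball)
    refine ⟨S ∪ U, hSo.union isOpen_ball, ?_, fun m => C m \ closure U, ?_⟩
    · intro k hk
      rcases Nat.lt_succ_iff_lt_or_eq.1 hk with hk | rfl
      · exact (h1 k hk).mono (inter_subset_inter_left _ subset_union_left)
      · exact ⟨x, Or.inr (mem_ball_self (by linarith)),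
          (hC k hj).2.2.1 hxC⟩
    · intro m hm
      refine ⟨(hC m hm).1.sdiff isClosed_closure, ⟨p m, hp m hm, fun hmem => ?_⟩,
        (diff_subset).trans (hC m hm).2.2.1, ?_⟩
      · exact (hclU hmem).2 ⟨m, hm, rfl⟩
      · rw [closure_union]
        exact disjoint_union_right.2
          ⟨((hC m hm).2.2.2).mono_left diff_subset, disjoint_sdiff_left⟩

/-- In any perfect Polish space `X` there is a sequence `(S n)` of open sets such that
every nonempty open `U ⊆ X` eventually meets both `S n` and the interior of the
complement of `S n`. -/
theorem stmt11 (X : Type) [TopologicalSpace X] [PolishSpace X]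
    (hperf : Perfect (Set.univ : Set X)) :
    ∃ S : ℕ → Set X, (∀ n, IsOpen (S n)) ∧
      ∀ U : Set X, IsOpen U → U.Nonempty →
        ∃ N : ℕ, ∀ n ≥ N, (S n ∩ U).Nonempty ∧ (interior (S n)ᶜ ∩ U).Nonempty := by
  cases isEmpty_or_nonempty X with
  | inl h =>
    exact ⟨fun _ => ∅, fun _ => isOpen_empty,
      fun U _ hU => (IsEmpty.false hU.choose).elim⟩
  | inr h =>
    letI := TopologicalSpace.upgradeIsCompletelyMetrizable X
    obtain ⟨u, hu⟩ := TopologicalSpace.exists_dense_seq X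
    set B : ℕ → Set X := fun k => ball (u k.unpair.1) (1 / (k.unpair.2 + 1)) with hB
    have hBo : ∀ k, IsOpen (B k) := fun k => isOpen_ball
    have hBne : ∀ k, (B k).Nonempty := fun k =>
      ⟨u k.unpair.1, mem_ball_self (by positivity)⟩
    have hbasis : ∀ U : Set X, IsOpen U → U.Nonempty → ∃ k, B k ⊆ U := by
      intro U hUo hUne
      obtain ⟨x, hx⟩ := hUne
      obtain ⟨ε, hε, hball⟩ := Metric.isOpen_iff.1 hUo x hx
      obtain ⟨m, hm⟩ := exists_nat_one_div_lt (show (0:ℝ) < ε/2 by linarith)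
      obtain ⟨i, hi⟩ := hu.exists_dist_lt x (show (0:ℝ) < 1/(m+1) by positivity)
      refine ⟨Nat.pair i m, fun y hy => hball ?_⟩
      have h1 : dist y (u i) < 1/(m+1) := by
        simpa [hB, Nat.unpair_pair] using hy
      have h2 : dist y x ≤ dist y (u i) + dist x (u i) := dist_triangle_right y x (u i)
      have : dist y x < ε := by
        have : (1:ℝ)/(m+1) < ε/2 := hm
        push_cast at h1 ⊢
        linarith
      exact mem_ball.2 this
    have key := fun n => aux_main hperf B hBo hBne n
    choose S hSo hS using key
    refine ⟨S, hSo, fun U hUo hUne => ?_⟩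
    obtain ⟨k, hk⟩ := hbasis U hUo hUne
    refine ⟨k, fun n hn => ?_⟩
    obtain ⟨h1, h2⟩ := hS n k hn
    rw [interior_compl]
    exact ⟨h1.mono (inter_subset_inter_right _ hk), h2.mono (inter_subset_inter_right _ hk)⟩
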